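/- In the z-order on [0,1)^d, if a point q lies outside a quadtree cell C of level i, then σ(q) is either strictly less than σ(p) for all p ∈ C or strictly greater than σ(p) for all p ∈ C. -/

import Mathlib

/-- The `j`-th binary digit of a real number. -/
noncomputable def rbit (x : ℝ) (j : ℕ) : ℕ := (⌊x * 2 ^ j⌋ % 2).toNat




lemma rbit_le_one (x : ℝ) (j : ℕ) : rbit x j ≤ 1 := by
  unfold rbit
  have := Int.emod_two_eq ⌊x * 2 ^ j⌋
  omega

lemma floor_two_mul' (y : ℝ) : ⌊2*y⌋ = 2*⌊y⌋ ∨ ⌊2*y⌋ = 2*⌊y⌋+1 := by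
  have h1 : (2:ℤ)*⌊y⌋ ≤ ⌊2*y⌋ := by
    apply Int.le_floor.2
    push_cast
    nlinarith [Int.floor_le y]
  have h2 : ⌊2*y⌋ < 2*⌊y⌋ + 2 := by
    apply Int.floor_lt.2
    push_cast
    nlinarith [Int.lt_floor_add_one y]
  omega

lemma rbit_rec (x : ℝ) (j : ℕ) : ⌊x*2^(j+1)⌋ = 2*⌊x*2^j⌋ + rbit x (j+1) := by
  have h : x * 2^(j+1) = 2 * (x * 2^j) := by ring
  rcases floor_two_mul' (x * 2^j) with h2 | h2 <;>
  · unfold rbit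
    rw [h, h2]
    omega

lemma partial_sum (x : ℝ) (hx : ⌊x⌋ = 0) (n : ℕ) :
    ∑ j ∈ Finset.range n, (rbit x (j+1):ℝ)/2^(j+1) = (⌊x * 2^n⌋ : ℝ)/2^n := by
  induction n with
  | zero => simp [hx]
  | succ n ih =>
    rw [Finset.sum_range_succ, ih, rbit_rec]
    push_cast
    field_simp
    ring

lemma exists_zero_bit (x : ℝ) (j0 : ℕ) : ∃ j, j0 < j ∧ rbit x j = 0 := by
  by_contra h
  push_neg at h
  -- all bits beyond j0 are 1
  have hone : ∀ j, j0 < j → rbit x j = 1 := fun j hj => by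
    have := rbit_le_one x j
    have := h j hj
    omega
  have key : ∀ r : ℕ, ⌊x * 2^(j0+r)⌋ = 2^r * ⌊x * 2^j0⌋ + 2^r - 1 := by
    intro r
    induction r with
    | zero => simp
    | succ r ih =>
      have heq : j0 + (r+1) = (j0 + r) + 1 := by omega
      rw [heq, rbit_rec, ih, hone _ (by omega)]
      ring
  -- then x ≥ (⌊x*2^j0⌋+1)/2^j0 - 2^{-(j0+r)} for all r
  set ε : ℝ := (⌊x * 2^j0⌋ : ℝ) + 1 - x * 2^j0 with hε
  have hεpos : 0 < ε := by
    have := Int.lt_floor_add_one (x * 2^j0)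
    rw [hε]; linarith
  obtain ⟨r, hr⟩ := pow_unbounded_of_one_lt (1/ε) (by norm_num : (1:ℝ) < 2)
  have hfl : (⌊x * 2^(j0+r)⌋ : ℝ) ≤ x * 2^(j0+r) := Int.floor_le _
  rw [key r] at hfl
  push_cast at hfl
  have h2 : (0:ℝ) < 2^r := by positivity
  have : (2:ℝ)^r * ε ≤ 1 := by
    have : x * 2^(j0+r) = (x * 2^j0) * 2^r := by ring
    rw [this] at hfl
    nlinarith
  rw [div_lt_iff₀ hεpos] at hr
  nlinarith

lemma floor_in_cell (x : ℝ) (m : ℤ) (i j : ℕ) (hj : j ≤ i)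
    (h1 : (m:ℝ)/2^i ≤ x) (h2 : x < ((m:ℝ)+1)/2^i) :
    ⌊x * 2^j⌋ = m / 2^(i-j) := by
  set s := i - j with hs
  set c : ℤ := m / 2^s with hc
  have h2i : (0:ℝ) < 2^i := by positivity
  have h2s' : (0:ℝ) < 2^s := by positivity
  have hii : (2:ℝ)^i = 2^j * 2^s := by rw [← pow_add]; congr 1; omega
  have hxl : (m:ℝ) ≤ x * 2^i := by rw [div_le_iff₀ h2i] at h1; linarith
  have hxu : x * 2^i < (m:ℝ) + 1 := by rw [lt_div_iff₀ h2i] at h2; linarith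
  have h2sz : (0:ℤ) < 2^s := by positivity
  rw [Int.floor_eq_iff]
  constructor
  · have hle : c * 2^s ≤ m := Int.ediv_mul_le m (by positivity)
    have h1' : (c:ℝ) * 2^s ≤ x * 2^j * 2^s := by
      have : (c:ℝ) * 2^s ≤ (m:ℝ) := by exact_mod_cast hle
      calc (c:ℝ) * 2^s ≤ (m:ℝ) := this
        _ ≤ x * 2^i := hxl
        _ = x * 2^j * 2^s := by rw [hii]; ring
    exact le_of_mul_le_mul_right h1' h2s'
  · have hlt : m < (c + 1) * 2^s := Int.lt_ediv_add_one_mul_self m h2sz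
    have hlt' : (m:ℝ) + 1 ≤ ((c:ℝ) + 1) * 2^s := by exact_mod_cast hlt
    have h1' : x * 2^j * 2^s < ((c:ℝ) + 1) * 2^s := by
      calc x * 2^j * 2^s = x * 2^i := by rw [hii]; ring
        _ < (m:ℝ) + 1 := hxu
        _ ≤ ((c:ℝ) + 1) * 2^s := hlt'
    have h2 := lt_of_mul_lt_mul_right h1' (le_of_lt h2s')
    push_cast
    linarith

lemma natbits_inj : ∀ (N : ℕ) (b c : ℕ → ℕ), (∀ n, b n ≤ 1) → (∀ n, c n ≤ 1) →
    (∑ n ∈ Finset.range N, b n * 2^n = ∑ n ∈ Finset.range N, c n * 2^n) →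
    ∀ n < N, b n = c n := by
  intro N
  induction N with
  | zero => intro b c _ _ _ n hn; omega
  | succ N ih =>
    intro b c hb hc hsum n hn
    rw [Finset.sum_range_succ'] at hsum
    rw [Finset.sum_range_succ'] at hsum
    simp only [pow_succ] at hsum
    have h1 : ∀ (f : ℕ → ℕ), ∑ k ∈ Finset.range N, f (k+1) * (2^k * 2) =
        2 * ∑ k ∈ Finset.range N, f (k+1) * 2^k := by
      intro f
      rw [Finset.mul_sum]
      congr 1; funext k; ring
    rw [h1 b, h1 c] at hsum
    simp only [pow_zero, mul_one] at hsum
    have hb0 : b 0 = c 0 := by have := hb 0; have := hc 0; omega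
    have hrec : ∑ k ∈ Finset.range N, b (k+1) * 2^k = ∑ k ∈ Finset.range N, c (k+1) * 2^k := by
      have := hb 0; have := hc 0; omega
    have := ih (fun k => b (k+1)) (fun k => c (k+1)) (fun k => hb _) (fun k => hc _) hrec
    rcases n with _ | n
    · exact hb0
    · exact this n (by omega)

lemma sum_eq_nat (N : ℕ) (b : ℕ → ℕ) :
    ∑ n ∈ Finset.range N, (b n:ℝ)/2^(n+1) =
      ((∑ n ∈ Finset.range N, b (N-1-n) * 2^n : ℕ) : ℝ)/2^N := by
  rw [← Finset.sum_range_reflect (fun n => (b (N-1-n) : ℕ) * 2^n) N]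
  push_cast
  rw [Finset.sum_div]
  apply Finset.sum_congr rfl
  intro n hn
  simp only [Finset.mem_range] at hn
  have h1 : N - 1 - (N - 1 - n) = n := by omega
  rw [h1]
  have h2 : (2:ℝ)^(N - 1 - n) / 2^N = 1/2^(n+1) := by
    rw [div_eq_div_iff (by positivity) (by positivity), one_mul, ← pow_add]
    congr 1; omega
  rw [div_eq_div_iff (by positivity) (by positivity)]
  have : (2:ℝ)^(N-1-n) * 2^(n+1) = 2^N := by rw [← pow_add]; congr 1; omega
  rw [mul_assoc, this]

-- real-level bit injectivity
lemma rbits_inj (N : ℕ) (b c : ℕ → ℕ) (hb : ∀ n, b n ≤ 1) (hc : ∀ n, c n ≤ 1)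
    (h : ∑ n ∈ Finset.range N, (b n:ℝ)/2^(n+1) = ∑ n ∈ Finset.range N, (c n:ℝ)/2^(n+1)) :
    ∀ n < N, b n = c n := by
  rw [sum_eq_nat, sum_eq_nat] at h
  have h2 : (∑ n ∈ Finset.range N, b (N-1-n) * 2^n : ℕ) =
      (∑ n ∈ Finset.range N, c (N-1-n) * 2^n : ℕ) := by
    field_simp at h
    exact_mod_cast h
  intro n hn
  have := natbits_inj N (fun k => b (N-1-k)) (fun k => c (N-1-k))
    (fun k => hb _) (fun k => hc _) h2 (N-1-n) (by omega)
  simpa [show N-1-(N-1-n) = n by omega] using this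

lemma half_pow (n : ℕ) : (1:ℝ)/2/2^n = 1/2^(n+1) := by
  rw [pow_succ]; field_simp

lemma geo_summable : Summable (fun n : ℕ => (1:ℝ)/2^(n+1)) := by
  have h : (fun n : ℕ => (1:ℝ)/2^(n+1)) = fun n => 1/2/2^n :=
    funext fun n => (half_pow n).symm
  rw [h]; exact summable_geometric_two' 1

lemma geo_tsum : ∑' n : ℕ, (1:ℝ)/2^(n+1) = 1 := by
  have := tsum_geometric_two' 1
  calc ∑' n : ℕ, (1:ℝ)/2^(n+1) = ∑' n : ℕ, (1:ℝ)/2/2^n := by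
        apply tsum_congr; intro n; rw [half_pow]
    _ = 1 := this

lemma geo_fin (r : ℕ) : ∑ n ∈ Finset.range r, (1:ℝ)/2^(n+1) = 1 - 1/2^r := by
  induction r with
  | zero => simp
  | succ r ih =>
    rw [Finset.sum_range_succ, ih, pow_succ]
    field_simp
    ring

lemma bitsum_summable (b : ℕ → ℕ) (hb : ∀ n, b n ≤ 1) :
    Summable (fun n => (b n:ℝ)/2^(n+1)) := by
  apply Summable.of_nonneg_of_le (fun n => by positivity) (fun n => ?_) geo_summable
  have h1 : (b n : ℝ) ≤ 1 := by exact_mod_cast hb n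
  gcongr

lemma bitsum_le (b : ℕ → ℕ) (hb : ∀ n, b n ≤ 1) :
    ∑' n, (b n:ℝ)/2^(n+1) ≤ 1 := by
  rw [← geo_tsum]
  apply Summable.tsum_le_tsum _ (bitsum_summable b hb) geo_summable
  intro n
  have h1 : (b n : ℝ) ≤ 1 := by exact_mod_cast hb n
  gcongr

lemma bitsum_nonneg (b : ℕ → ℕ) : 0 ≤ ∑' n, (b n:ℝ)/2^(n+1) :=
  tsum_nonneg (fun n => by positivity)

lemma bitsum_lt (b : ℕ → ℕ) (hb : ∀ n, b n ≤ 1) (n0 : ℕ) (h0 : b n0 = 0) :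
    ∑' n, (b n:ℝ)/2^(n+1) < 1 := by
  have hS := bitsum_summable b hb
  rw [← Summable.sum_add_tsum_nat_add (n0+1) hS]
  have hhead : ∑ n ∈ Finset.range (n0+1), (b n:ℝ)/2^(n+1) ≤ 1 - 1/2^n0 := by
    rw [Finset.sum_range_succ, h0]
    simp only [Nat.cast_zero, zero_div, add_zero]
    rw [← geo_fin]
    apply Finset.sum_le_sum
    intro n _
    have h1 : (b n : ℝ) ≤ 1 := by exact_mod_cast hb n
    gcongr
  have htail : ∑' n, (b (n + (n0+1)):ℝ)/2^((n + (n0+1))+1) ≤ 1/2^(n0+1) := by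
    have key : ∀ n : ℕ, (b (n + (n0+1)):ℝ)/2^((n + (n0+1))+1)
        = (1/2^(n0+1)) * ((b (n + (n0+1)):ℝ)/2^(n+1)) := by
      intro n
      rw [div_mul_div_comm, one_mul, ← pow_add]
      congr 2
      omega
    calc ∑' n, (b (n + (n0+1)):ℝ)/2^((n + (n0+1))+1)
        = (1/2^(n0+1)) * ∑' n, ((b (n + (n0+1)):ℝ)/2^(n+1)) := by
          rw [← tsum_mul_left]; exact tsum_congr key
      _ ≤ (1/2^(n0+1)) * 1 := by
          have := bitsum_le (fun n => b (n + (n0+1))) (fun n => hb _)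
          have hp : (0:ℝ) ≤ 1/2^(n0+1) := by positivity
          exact mul_le_mul_of_nonneg_left this hp
      _ = 1/2^(n0+1) := mul_one _
  have h2 : (0:ℝ) < 2^n0 := by positivity
  have e1 : (1:ℝ)/2^(n0+1) < 1/2^n0 := by
    apply div_lt_div_of_pos_left one_pos h2
    rw [pow_succ]; nlinarith
  linarith

/-- The shuffle (z-order value) of a point `p ∈ [0,1)^d`: the real number whose
binary expansion interleaves the fractional bits of the coordinates of `p`. -/
noncomputable def shuffle (d : ℕ) [NeZero d] (p : Fin d → ℝ) : ℝ :=
  ∑' m : ℕ, (rbit (p ⟨m % d, Nat.mod_lt m (NeZero.pos d)⟩) (m / d + 1) : ℝ) / 2 ^ (m + 1)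



noncomputable def sbit (d : ℕ) [NeZero d] (p : Fin d → ℝ) (n : ℕ) : ℕ :=
  rbit (p ⟨n % d, Nat.mod_lt n (NeZero.pos d)⟩) (n / d + 1)

lemma sbit_le_one (d : ℕ) [NeZero d] (p : Fin d → ℝ) (n : ℕ) : sbit d p n ≤ 1 :=
  rbit_le_one _ _

lemma shuffle_eq (d : ℕ) [NeZero d] (p : Fin d → ℝ) :
    shuffle d p = ∑' n, (sbit d p n : ℝ)/2^(n+1) := rfl

lemma sbit_apply (d : ℕ) [NeZero d] (p : Fin d → ℝ) (k : Fin d) (j : ℕ) :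
    sbit d p (k.val + j*d) = rbit (p k) (j+1) := by
  unfold sbit
  have h1 : (k.val + j*d) % d = k.val := by
    rw [Nat.add_mul_mod_self_right, Nat.mod_eq_of_lt k.isLt]
  have h2 : (k.val + j*d)/d = j := by
    rw [Nat.add_mul_div_right _ _ (NeZero.pos d), Nat.div_eq_of_lt k.isLt, Nat.zero_add]
  simp only [h1, h2, Fin.eta]

lemma shuffle_split (d : ℕ) [NeZero d] (p : Fin d → ℝ) (N : ℕ) :
    shuffle d p = ∑ n ∈ Finset.range N, (sbit d p n : ℝ)/2^(n+1)
      + (1/2^N) * ∑' n, (sbit d p (n+N) : ℝ)/2^(n+1) := by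
  rw [shuffle_eq]
  rw [← Summable.sum_add_tsum_nat_add N (bitsum_summable _ (sbit_le_one d p))]
  congr 1
  rw [← tsum_mul_left]
  apply tsum_congr
  intro n
  rw [div_mul_div_comm, one_mul, ← pow_add]
  congr 2
  omega

lemma shuffle_ge (d : ℕ) [NeZero d] (p : Fin d → ℝ) (N : ℕ) :
    ∑ n ∈ Finset.range N, (sbit d p n : ℝ)/2^(n+1) ≤ shuffle d p := by
  rw [shuffle_split d p N]
  have h1 : (0:ℝ) ≤ ∑' n, (sbit d p (n+N) : ℝ)/2^(n+1) := bitsum_nonneg _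
  have h2 : (0:ℝ) ≤ 1/2^N := by positivity
  nlinarith

lemma shuffle_lt (d : ℕ) [NeZero d] (p : Fin d → ℝ) (i : ℕ) :
    shuffle d p < ∑ n ∈ Finset.range (d*i), (sbit d p n : ℝ)/2^(n+1) + 1/2^(d*i) := by
  set N := d*i with hN
  obtain ⟨j, hji, hj0⟩ := exists_zero_bit (p ⟨0, NeZero.pos d⟩) i
  set n0 := d*(j-1-i) with hn0
  have hidx : n0 + N = (0:ℕ) + (j-1)*d := by
    rw [hn0, hN, Nat.zero_add, ← Nat.mul_add, Nat.mul_comm (j-1) d]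
    congr 1
    omega
  have hz : sbit d p (n0 + N) = 0 := by
    have := sbit_apply d p ⟨0, NeZero.pos d⟩ (j-1)
    simp only [hidx]
    rw [show (⟨0, NeZero.pos d⟩ : Fin d).val = 0 from rfl] at this
    rw [this, show j - 1 + 1 = j by omega, hj0]
  have htail : ∑' n, (sbit d p (n+N) : ℝ)/2^(n+1) < 1 :=
    bitsum_lt (fun n => sbit d p (n+N)) (fun n => sbit_le_one d p _) n0 hz
  rw [shuffle_split d p N]
  have h2 : (0:ℝ) < 1/2^N := by positivity
  nlinarith

-- bit formula inside a cell
lemma sbit_in_cell (d i : ℕ) [NeZero d] (p : Fin d → ℝ) (m : Fin d → ℤ)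
    (hcell : ∀ k, (m k : ℝ) / 2 ^ i ≤ p k ∧ p k < ((m k : ℝ) + 1) / 2 ^ i)
    (n : ℕ) (hn : n < d*i) :
    sbit d p n = ((m ⟨n % d, Nat.mod_lt n (NeZero.pos d)⟩ / 2^(i - (n/d+1))) % 2).toNat := by
  set k : Fin d := ⟨n % d, Nat.mod_lt n (NeZero.pos d)⟩ with hk
  have hji : n/d + 1 ≤ i := by
    have h' : n < i * d := by rw [Nat.mul_comm]; exact hn
    have : n/d < i := (Nat.div_lt_iff_lt_mul (NeZero.pos d)).2 h'
    omega
  unfold sbit rbit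
  rw [floor_in_cell (p k) (m k) i (n/d+1) hji (hcell k).1 (hcell k).2]

/-- If `q ∈ [0,1)^d` lies outside a level-`i` quadtree cell `C`, then `σ(q)` is
either strictly below `σ(p)` for all `p ∈ C`, or strictly above `σ(p)` for all
`p ∈ C`. -/
theorem stmt12 (d i : ℕ) [NeZero d] (q : Fin d → ℝ)
    (hq : ∀ k, q k ∈ Set.Ico (0:ℝ) 1)
    (m : Fin d → ℤ) (hm : ∀ k, 0 ≤ m k ∧ m k < 2 ^ i)
    (hout : ¬ ∀ k, (m k : ℝ) / 2 ^ i ≤ q k ∧ q k < ((m k : ℝ) + 1) / 2 ^ i) :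
    (∀ p : Fin d → ℝ, (∀ k, p k ∈ Set.Ico (0:ℝ) 1) →
        (∀ k, (m k : ℝ) / 2 ^ i ≤ p k ∧ p k < ((m k : ℝ) + 1) / 2 ^ i) →
        shuffle d q < shuffle d p) ∨
      (∀ p : Fin d → ℝ, (∀ k, p k ∈ Set.Ico (0:ℝ) 1) →
        (∀ k, (m k : ℝ) / 2 ^ i ≤ p k ∧ p k < ((m k : ℝ) + 1) / 2 ^ i) →
        shuffle d p < shuffle d q) := by
  have h2i : (0:ℝ) < 2^i := by positivity
  -- canonical cell point
  set pm : Fin d → ℝ := fun k => (m k : ℝ) / 2 ^ i with hpm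
  have hpm_cell : ∀ k, (m k : ℝ)/2^i ≤ pm k ∧ pm k < ((m k:ℝ)+1)/2^i := by
    intro k
    refine ⟨le_refl _, ?_⟩
    apply div_lt_div_of_pos_right ?_ h2i
    linarith
  -- partial sums
  have hS_cell : ∀ p : Fin d → ℝ,
      (∀ k, (m k : ℝ)/2^i ≤ p k ∧ p k < ((m k:ℝ)+1)/2^i) →
      ∑ n ∈ Finset.range (d*i), (sbit d p n : ℝ)/2^(n+1)
        = ∑ n ∈ Finset.range (d*i), (sbit d pm n : ℝ)/2^(n+1) := by
    intro p hp
    apply Finset.sum_congr rfl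
    intro n hn
    simp only [Finset.mem_range] at hn
    rw [sbit_in_cell d i p m hp n hn, sbit_in_cell d i pm m hpm_cell n hn]
  -- Sq ≠ Sc
  have hne : ∑ n ∈ Finset.range (d*i), (sbit d q n : ℝ)/2^(n+1)
      ≠ ∑ n ∈ Finset.range (d*i), (sbit d pm n : ℝ)/2^(n+1) := by
    intro he
    apply hout
    have hbits := rbits_inj (d*i) (sbit d q) (sbit d pm)
      (sbit_le_one d q) (sbit_le_one d pm) he
    intro k
    have hcoord : ∀ j < i, rbit (q k) (j+1) = rbit (pm k) (j+1) := by
      intro j hj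
      have hcomm : d * i = i * d := Nat.mul_comm d i
      have hk : k.val < d := k.isLt
      have hstep : (j+1)*d ≤ i*d := Nat.mul_le_mul_right d (by omega)
      have hlt : k.val + j*d < d*i := by
        rw [Nat.succ_mul] at hstep
        omega
      have := hbits (k.val + j*d) hlt
      rwa [sbit_apply, sbit_apply] at this
    have hq0 : ⌊q k⌋ = 0 := Int.floor_eq_zero_iff.2 (hq k)
    have hpm0 : ⌊pm k⌋ = 0 := by
      apply Int.floor_eq_zero_iff.2
      constructor
      · have := (hm k).1
        have : (0:ℝ) ≤ (m k:ℝ) := by exact_mod_cast this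
        positivity
      · have h1 : (m k : ℝ) < 2^i := by exact_mod_cast (hm k).2
        show (m k:ℝ)/2^i < 1
        rw [div_lt_one h2i]
        exact h1
    have hps : (⌊q k * 2^i⌋:ℝ)/2^i = (⌊pm k * 2^i⌋:ℝ)/2^i := by
      rw [← partial_sum (q k) hq0 i, ← partial_sum (pm k) hpm0 i]
      apply Finset.sum_congr rfl
      intro j hj
      simp only [Finset.mem_range] at hj
      rw [hcoord j hj]
    have hpmf : ⌊pm k * 2^i⌋ = m k := by
      have : pm k * 2^i = (m k:ℝ) := div_mul_cancel₀ _ (ne_of_gt h2i)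
      rw [this, Int.floor_intCast]
    have hfl : ⌊q k * 2^i⌋ = m k := by
      rw [hpmf] at hps
      field_simp at hps
      exact_mod_cast hps
    constructor
    · rw [div_le_iff₀ h2i]
      have := Int.floor_le (q k * 2^i)
      rw [hfl] at this
      linarith
    · rw [lt_div_iff₀ h2i]
      have := Int.lt_floor_add_one (q k * 2^i)
      rw [hfl] at this
      push_cast at this ⊢
      linarith
  -- natural number representations
  set N := d * i with hN
  set Mq : ℕ := ∑ n ∈ Finset.range N, sbit d q (N-1-n) * 2^n with hMq
  set Mc : ℕ := ∑ n ∈ Finset.range N, sbit d pm (N-1-n) * 2^n with hMc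
  have hSq : ∑ n ∈ Finset.range N, (sbit d q n : ℝ)/2^(n+1) = (Mq:ℝ)/2^N :=
    sum_eq_nat N (sbit d q)
  have hSc : ∑ n ∈ Finset.range N, (sbit d pm n : ℝ)/2^(n+1) = (Mc:ℝ)/2^N :=
    sum_eq_nat N (sbit d pm)
  have h2N : (0:ℝ) < 2^N := by positivity
  have hMne : Mq ≠ Mc := by
    intro h
    apply hne
    rw [hSq, hSc, h]
  rcases Nat.lt_or_ge Mq Mc with hlt | hge
  · left
    intro p hpbox hpcell
    have h1 := shuffle_lt d q i
    have h5 := hS_cell p hpcell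
    have h4 := shuffle_ge d p N
    rw [h5, hSc] at h4
    rw [hSq] at h1
    have h2 : ((Mq:ℝ)+1) ≤ (Mc:ℝ) := by exact_mod_cast hlt
    have h3 : (Mq:ℝ)/2^N + 1/2^N ≤ (Mc:ℝ)/2^N := by
      rw [← add_div]
      gcongr
    linarith
  · right
    have hlt : Mc < Mq := by omega
    intro p hpbox hpcell
    have h1 := shuffle_lt d p i
    have h5 := hS_cell p hpcell
    rw [h5, hSc] at h1
    have h4 := shuffle_ge d q N
    rw [hSq] at h4
    have h2 : ((Mc:ℝ)+1) ≤ (Mq:ℝ) := by exact_mod_cast hlt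
    have h3 : (Mc:ℝ)/2^N + 1/2^N ≤ (Mq:ℝ)/2^N := by
      rw [← add_div]
      gcongr
    linarith
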